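/- Let H be a complex Hilbert space, M a von Neumann algebra on H, and ξ ∈ H a unit vector. Let ε ∈ M be an orthogonal projection with εξ = ξ such that for every a ∈ M with εaε ≥ 0 and ⟨εaεξ, ξ⟩ = 0 one has εaε = 0. Let p be the orthogonal projection of H onto the closure of {aξ : a ∈ M} (so p lies in the commutant M' and commutes with ε). Then: (i) εpξ = ξ; (ii) ξ is separating for the compression: for every a ∈ M, if εpaεp ≥ 0 and ⟨εpaεpξ, ξ⟩ = 0 then εpaεp = 0; (iii) ξ is cyclic for the compression: the closure of {εpaεpξ : a ∈ M} equals the range of εp. -/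

import Mathlib

open ContinuousLinearMap in
/-- If `T` is a positive operator and `⟪T v, v⟫ = 0`, then `T v = 0`. -/
lemma aux_pos_apply_eq_zero {H : Type*} [NormedAddCommGroup H] [InnerProductSpace ℂ H]
    [CompleteSpace H] {T : H →L[ℂ] H} (hT : T.IsPositive) {v : H}
    (h : (inner ℂ (T v) v : ℂ) = 0) : T v = 0 := by
  obtain ⟨s, hs_sa, -, hs_sq⟩ : ∃ s : H →L[ℂ] H, IsSelfAdjoint s ∧ 0 ≤ s ∧ s ^ 2 = T :=
    ⟨CFC.sqrt T, (CFC.sqrt_nonneg T).isSelfAdjoint, CFC.sqrt_nonneg T,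
      CFC.sq_sqrt T ((ContinuousLinearMap.nonneg_iff_isPositive T).mpr hT)⟩
  have hadj : ContinuousLinearMap.adjoint s = s := by
    rw [← ContinuousLinearMap.star_eq_adjoint, hs_sa.star_eq]
  have h1 : (inner ℂ (s v) (s v) : ℂ) = 0 := by
    calc (inner ℂ (s v) (s v) : ℂ)
        = inner ℂ ((ContinuousLinearMap.adjoint s) (s v)) v :=
          (ContinuousLinearMap.adjoint_inner_left s v (s v)).symm
      _ = inner ℂ (s (s v)) v := by rw [hadj]
      _ = inner ℂ (T v) v := by rw [← hs_sq]; simp [pow_two, ContinuousLinearMap.mul_apply]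
      _ = 0 := h
  have hsv : s v = 0 := inner_self_eq_zero.mp h1
  have : T v = s (s v) := by rw [← hs_sq]; simp [pow_two, ContinuousLinearMap.mul_apply]
  rw [this, hsv, map_zero]

theorem stmt_1 {H : Type*} [NormedAddCommGroup H] [InnerProductSpace ℂ H] [CompleteSpace H]
    (M : VonNeumannAlgebra H) (ξ : H) (hξ : ‖ξ‖ = 1)
    (e : H →L[ℂ] H) (he : e ∈ M) (heSA : IsSelfAdjoint e) (heIdem : e * e = e)
    (heξ : e ξ = ξ)
    (hfaith : ∀ a : H →L[ℂ] H, a ∈ M → (e * a * e).IsPositive →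
      (inner ℂ ((e * a * e) ξ) ξ : ℂ) = 0 → e * a * e = 0)
    (p : H →L[ℂ] H) (hpSA : IsSelfAdjoint p) (hpIdem : p * p = p)
    (hpran : ∀ η : H, p η ∈ closure ((fun a : H →L[ℂ] H => a ξ) '' (M : Set (H →L[ℂ] H))))
    (hpfix : ∀ η ∈ closure ((fun a : H →L[ℂ] H => a ξ) '' (M : Set (H →L[ℂ] H))), p η = η) :
    (e * p) ξ = ξ ∧
    (∀ a : H →L[ℂ] H, a ∈ M → (e * p * a * (e * p)).IsPositive →
        (inner ℂ ((e * p * a * (e * p)) ξ) ξ : ℂ) = 0 → e * p * a * (e * p) = 0) ∧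
    closure ((fun a : H →L[ℂ] H => (e * p * a * (e * p)) ξ) '' (M : Set (H →L[ℂ] H)))
      = Set.range (e * p) := by
  classical
  set S₀ : Set H := (fun a : H →L[ℂ] H => a ξ) '' (M : Set (H →L[ℂ] H)) with hS₀def
  have hξS : ξ ∈ closure S₀ := subset_closure ⟨1, one_mem M, by simp⟩
  have hpξ : p ξ = ξ := hpfix ξ hξS
  -- members of M map S₀ into itself
  have hmapsto : ∀ a : H →L[ℂ] H, a ∈ M → Set.MapsTo (⇑a) S₀ S₀ := by
    rintro a ha _ ⟨b, hb, rfl⟩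
    exact ⟨a * b, mul_mem ha hb, by simp [ContinuousLinearMap.mul_apply]⟩
  have hfixS : ∀ a : H →L[ℂ] H, a ∈ M → ∀ η ∈ closure S₀, a η ∈ closure S₀ := by
    intro a ha η hη
    exact map_mem_closure a.continuous hη (hmapsto a ha)
  -- p commutes with every element of M
  have hpap : ∀ a : H →L[ℂ] H, a ∈ M → p * a * p = a * p := by
    intro a ha
    ext η
    simp only [ContinuousLinearMap.mul_apply]
    exact hpfix _ (hfixS a ha _ (hpran η))
  have hcomm : ∀ a : H →L[ℂ] H, a ∈ M → p * a = a * p := by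
    intro a ha
    have h1 := hpap a ha
    have h2 := congrArg star (hpap (star a) (star_mem ha))
    rw [star_mul, star_mul, star_mul, star_star, hpSA.star_eq] at h2
    -- h2 : p * (a * p) = p * a  (hopefully)
    rw [← mul_assoc] at h2
    rw [h2] at h1
    exact h1
  -- part (i)
  have hpe : p * e = e * p := hcomm e he
  have hepξ : (e * p) ξ = ξ := by
    simp [ContinuousLinearMap.mul_apply, hpξ, heξ]
  refine ⟨hepξ, ?_, ?_⟩
  · -- part (ii)
    intro a haM hx hωx
    have hpa : p * a = a * p := hcomm a haM
    have hpa' : ∀ z : H →L[ℂ] H, p * (a * z) = a * (p * z) := fun z => by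
      rw [← mul_assoc, hpa, mul_assoc]
    have hpe' : ∀ z : H →L[ℂ] H, p * (e * z) = e * (p * z) := fun z => by
      rw [← mul_assoc, hpe, mul_assoc]
    have hx1 : e * p * a * (e * p) = e * a * e * p := by
      simp only [mul_assoc]
      rw [hpa' (e * p), hpe' p, hpIdem]
    set b : H →L[ℂ] H := a + star a with hbdef
    have hbM : b ∈ M := add_mem haM (star_mem haM)
    have hbsa : star b = b := by simp [hbdef, star_add, add_comm]
    set y : H →L[ℂ] H := e * b * e with hydef
    have hysa : IsSelfAdjoint y := by
      rw [IsSelfAdjoint, hydef, star_mul, star_mul, heSA.star_eq, hbsa, mul_assoc]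
    -- star x = e * star a * e * p
    have hx2 : star (e * p * a * (e * p)) = e * star a * e * p := by
      have hpsa : p * star a = star a * p := hcomm (star a) (star_mem haM)
      have hpsa' : ∀ z : H →L[ℂ] H, p * (star a * z) = star a * (p * z) := fun z => by
        rw [← mul_assoc, hpsa, mul_assoc]
      rw [hx1]
      rw [star_mul, star_mul, star_mul, hpSA.star_eq, heSA.star_eq]
      -- p * (e * (star a * e)) = e * star a * e * p
      simp only [mul_assoc]
      rw [hpe' (star a * e), hpsa' e, hpe]
    have hyp : y * p = (e * p * a * (e * p)) + star (e * p * a * (e * p)) := by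
      rw [hx2, hx1, hydef, hbdef, mul_add, add_mul, add_mul]
    -- x ξ = 0
    have hxξ : (e * p * a * (e * p)) ξ = 0 := aux_pos_apply_eq_zero hx hωx
    have hyξ : y ξ = 0 := by
      have h5 : y ξ = (y * p) ξ := by simp [ContinuousLinearMap.mul_apply, hpξ]
      rw [h5, hyp]
      simp [ContinuousLinearMap.add_apply, hxξ, hx.isSelfAdjoint.star_eq]
    -- apply faithfulness to a'' with e * a'' * e = y * y
    set a'' : H →L[ℂ] H := b * e * e * b with ha''def
    have ha''M : a'' ∈ M := mul_mem (mul_mem (mul_mem hbM he) he) hbM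
    have he'' : e * a'' * e = y * y := by
      rw [ha''def, hydef]; simp only [mul_assoc]
    have hyypos : (e * a'' * e).IsPositive := by
      rw [he'']
      have h1 := (ContinuousLinearMap.isPositive_one (E := H) (𝕜 := ℂ)).adjoint_conj y
      have h2 : ContinuousLinearMap.adjoint y = y := by
        rw [← ContinuousLinearMap.star_eq_adjoint, hysa.star_eq]
      have h3 : ContinuousLinearMap.adjoint y ∘L (1 : H →L[ℂ] H) ∘L y = y * y := by
        rw [h2]; ext η
        simp [ContinuousLinearMap.comp_apply, ContinuousLinearMap.mul_apply,
          ContinuousLinearMap.one_apply]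
      rwa [h3] at h1
    have hω'' : (inner ℂ ((e * a'' * e) ξ) ξ : ℂ) = 0 := by
      rw [he'']
      simp [ContinuousLinearMap.mul_apply, hyξ]
    have hyy0 : y * y = 0 := by rw [← he'']; exact hfaith a'' ha''M hyypos hω''
    have hy0 : y = 0 := by
      have h3 : ‖y‖ * ‖y‖ = 0 := by
        rw [← CStarRing.norm_star_mul_self, hysa.star_eq, hyy0, norm_zero]
      exact norm_eq_zero.mp (mul_self_eq_zero.mp h3)
    have h4 : (e * p * a * (e * p)) + star (e * p * a * (e * p)) = 0 := by
      rw [← hyp, hy0, zero_mul]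
    rw [hx.isSelfAdjoint.star_eq] at h4
    have h5 : (2 : ℂ) • (e * p * a * (e * p)) = 0 := by
      rw [two_smul]; exact h4
    rcases smul_eq_zero.mp h5 with h6 | h6
    · exact absurd h6 two_ne_zero
    · exact h6
  · -- part (iii)
    have himg : ((fun a : H →L[ℂ] H => (e * p * a * (e * p)) ξ) '' (M : Set (H →L[ℂ] H)))
        = (fun a : H →L[ℂ] H => e (a ξ)) '' (M : Set (H →L[ℂ] H)) := by
      apply Set.image_congr
      intro a ha
      have : (e * p * a * (e * p)) ξ = e (p (a ξ)) := by
        simp [ContinuousLinearMap.mul_apply, hpξ, heξ]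
      rw [this, hpfix _ (subset_closure ⟨a, ha, rfl⟩)]
    rw [himg]
    have hq : (e * p) * (e * p) = e * p := by
      rw [mul_assoc, ← mul_assoc p e p, hpe, mul_assoc, hpIdem, ← mul_assoc, heIdem]
    have hrange : Set.range (e * p) = {η : H | (e * p) η = η} := by
      ext η
      constructor
      · rintro ⟨ζ, rfl⟩
        show (e * p) ((e * p) ζ) = (e * p) ζ
        rw [← ContinuousLinearMap.mul_apply, hq]
      · intro hη
        exact ⟨η, hη⟩
    apply subset_antisymm
    · have hclosed : IsClosed {η : H | (e * p) η = η} :=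
        isClosed_eq (e * p).continuous continuous_id
      rw [hrange]
      apply closure_minimal ?_ hclosed
      rintro _ ⟨a, ha, rfl⟩
      show (e * p) (e (a ξ)) = e (a ξ)
      have h7 : e (a ξ) ∈ closure S₀ := subset_closure ⟨e * a, mul_mem he ha, by
        simp [ContinuousLinearMap.mul_apply]⟩
      have h8 := hpfix _ h7
      calc (e * p) (e (a ξ)) = e (p (e (a ξ))) := by simp [ContinuousLinearMap.mul_apply]
        _ = e (e (a ξ)) := by rw [h8]
        _ = (e * e) (a ξ) := rfl
        _ = e (a ξ) := by rw [heIdem]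
    · intro η hη
      rw [hrange] at hη
      have h8 : η = e (p η) := by
        have := hη
        simp only [ContinuousLinearMap.mul_apply] at this
        exact this.symm
      rw [h8]
      have h9 : e (p η) ∈ e '' (closure S₀) := ⟨p η, hpran η, rfl⟩
      have h10 : e '' (closure S₀) ⊆ closure (e '' S₀) :=
        image_closure_subset_closure_image e.continuous
      have h11 : e '' S₀ = (fun a : H →L[ℂ] H => e (a ξ)) '' (M : Set (H →L[ℂ] H)) := by
        rw [hS₀def, Set.image_image]
      rw [← h11]
      exact h10 h9
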